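/- If P(t) and Q(t) are two proper rational parametrizations of C and the reparametrizing curve 𝔊(P) has at least one rational component, then the reparametrizing curve 𝔊(Q) also has at least one rational component; that is, having a rational component of the reparametrizing curve is independent of the choice of proper parametrization of C. -/

import Mathlib

noncomputable section

namespace ConchoidPaper

open Polynomial

variable {K : Type*} [Field K]

/-- The squared norm `‖P‖² = b(P,P)` for the bilinear form
`b((x₁,x₂),(y₁,y₂)) = x₁y₁ + x₂y₂` on `K²`. -/
def normSq (P : K × K) : K := P.1 * P.1 + P.2 * P.2

/-- The zero set in `K²` of a bivariate polynomial (variables `X 0 ↦ y₁`, `X 1 ↦ y₂`). -/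
def zeroSet (f : MvPolynomial (Fin 2) K) : Set (K × K) :=
  {x | MvPolynomial.eval ![x.1, x.2] f = 0}

/-- Zariski closure in `K²`: the set of points at which every polynomial
vanishing identically on `S` vanishes. -/
def zClosure (S : Set (K × K)) : Set (K × K) :=
  {x | ∀ f : MvPolynomial (Fin 2) K,
      (∀ y ∈ S, MvPolynomial.eval ![y.1, y.2] f = 0) →
      MvPolynomial.eval ![x.1, x.2] f = 0}

/-- `S` is Zariski closed in `K²`. -/
def IsZClosed (S : Set (K × K)) : Prop := zClosure S ⊆ S

/-- `S` is irreducible for the Zariski topology on `K²`: it is nonempty and is not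
covered by two Zariski-closed sets unless it is contained in one of them. -/
def IsZIrreducible (S : Set (K × K)) : Prop :=
  S.Nonempty ∧
  ∀ F₁ F₂ : Set (K × K), IsZClosed F₁ → IsZClosed F₂ → S ⊆ F₁ ∪ F₂ → S ⊆ F₁ ∨ S ⊆ F₂

/-- `M` is an irreducible component of `X`: a maximal Zariski-closed irreducible subset. -/
def IsComponent (X M : Set (K × K)) : Prop :=
  M ⊆ X ∧ IsZClosed M ∧ IsZIrreducible M ∧
  ∀ M' : Set (K × K), M' ⊆ X → IsZClosed M' → IsZIrreducible M' → M ⊆ M' → M' = M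

/-- `Ω` is a nonempty Zariski-dense subset of `M`. -/
def IsDenseIn (Ω M : Set (K × K)) : Prop :=
  Ω.Nonempty ∧ Ω ⊆ M ∧ M ⊆ zClosure Ω

/-- The conchoid incidence variety `B(C)` of the curve `C = zeroSet f` from the focus `A`
at distance `d`: triples `(x̄, ȳ, λ)` with `f(ȳ) = 0`, `‖x̄ − ȳ‖² = d²` and
`x̄ = A + λ(ȳ − A)`. -/
def incidence (f : MvPolynomial (Fin 2) K) (A : K × K) (d : K) :
    Set ((K × K) × (K × K) × K) :=
  {w | w.2.1 ∈ zeroSet f ∧ normSq (w.1 - w.2.1) = d ^ 2 ∧ w.1 = A + w.2.2 • (w.2.1 - A)}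

/-- The conchoid `𝔠(C,A,d)`: the Zariski closure of `π₁(B(C))`. -/
def conchoid (f : MvPolynomial (Fin 2) K) (A : K × K) (d : K) : Set (K × K) :=
  zClosure (Prod.fst '' incidence f A d)

/-- `S` is one of the two isotropic lines `y₁ ± √(-1) y₂ = 0`. -/
def IsIsotropicLine (S : Set (K × K)) : Prop :=
  ∃ s : K, s ^ 2 = -1 ∧ S = {y : K × K | y.1 + s * y.2 = 0}

/-- `S` is a line passing through the point `A`. -/
def IsLineThrough (S : Set (K × K)) (A : K × K) : Prop :=
  ∃ u v : K, (u ≠ 0 ∨ v ≠ 0) ∧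
    S = {y : K × K | u * (y.1 - A.1) + v * (y.2 - A.2) = 0}

/-- `S` is a line in `K²`. -/
def IsLine (S : Set (K × K)) : Prop :=
  ∃ u v w : K, (u ≠ 0 ∨ v ≠ 0) ∧ S = {y : K × K | u * y.1 + v * y.2 + w = 0}

/-- The circle of center `A` and radius `d`, i.e. `‖ȳ − A‖² = d²`. -/
def circleSet (A : K × K) (d : K) : Set (K × K) := {y : K × K | normSq (y - A) = d ^ 2}

/-- The point of `K²` obtained by evaluating the pair of rational functions `P` at `t`. -/
def ratPoint (P : RatFunc K × RatFunc K) (t : K) : K × K :=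
  (P.1.num.eval t / P.1.denom.eval t, P.2.num.eval t / P.2.denom.eval t)

/-- `t` avoids the poles of both components of `P`. -/
def PolesAvoided (P : RatFunc K × RatFunc K) (t : K) : Prop :=
  P.1.denom.eval t ≠ 0 ∧ P.2.denom.eval t ≠ 0

/-- The image of the pair of rational functions `P`, poles avoided. -/
def paramImage (P : RatFunc K × RatFunc K) : Set (K × K) :=
  {x | ∃ t : K, PolesAvoided P t ∧ x = ratPoint P t}

/-- `P ∈ K(t)²` is a rational parametrization of the set `S ⊆ K²`: its components are
not both constant, its image lies in `S`, and its image is Zariski dense in `S`. -/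
def IsParamOf (S : Set (K × K)) (P : RatFunc K × RatFunc K) : Prop :=
  (¬ ∃ c : K × K, P.1 = RatFunc.C c.1 ∧ P.2 = RatFunc.C c.2) ∧
  paramImage P ⊆ S ∧ S ⊆ zClosure (paramImage P)

/-- `S` is rational: it admits a rational parametrization. -/
def IsRationalSet (S : Set (K × K)) : Prop := ∃ P : RatFunc K × RatFunc K, IsParamOf S P

/-- `P` is proper: `K(P₁,P₂) = K(t)`. -/
def IsProper (P : RatFunc K × RatFunc K) : Prop :=
  IntermediateField.adjoin K {P.1, P.2} = ⊤

/-- `P` is at rational distance to the focus `A` (`A`-rdf):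
`(P₁ − a)² + (P₂ − b)² = m(t)²` for some rational function `m`. -/
def IsRDF (A : K × K) (P : RatFunc K × RatFunc K) : Prop :=
  ∃ m : RatFunc K, (P.1 - RatFunc.C A.1) ^ 2 + (P.2 - RatFunc.C A.2) ^ 2 = m ^ 2

/-- A field is trivially a normalized GCD monoid; this makes `K[x₁]` a normalized GCD
monoid, so that primitive parts w.r.t. `x₂` of polynomials in `K[x₁][x₂]` make sense. -/
noncomputable local instance : NormalizedGCDMonoid K := by
  classical exact (inferInstance : NormalizedGCDMonoid K)

/-- The numerator of `−2x₂(P₁(x₁) − a) + (x₂² − 1)(P₂(x₁) − b)`, written as a polynomial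
in `x₂` (outer variable) with coefficients in `K[x₁]` (inner variable). -/
def repNum (A : K × K) (P : RatFunc K × RatFunc K) : Polynomial (Polynomial K) :=
  Polynomial.C ((P.2 - RatFunc.C A.2).num * (P.1 - RatFunc.C A.1).denom) *
      (Polynomial.X ^ 2 - 1) +
    Polynomial.C (-2 * ((P.1 - RatFunc.C A.1).num * (P.2 - RatFunc.C A.2).denom)) *
      Polynomial.X

/-- Defining polynomial of the reparametrizing curve `𝔊(P)`: the primitive part with
respect to `x₂` of the numerator of `−2x₂(P₁(x₁) − a) + (x₂² − 1)(P₂(x₁) − b)`. -/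
def repPoly (A : K × K) (P : RatFunc K × RatFunc K) : Polynomial (Polynomial K) :=
  (repNum A P).primPart

/-- Zero set in the `(x₁,x₂)`-plane of `g ∈ K[x₁][x₂]` (`x₂` outer, `x₁` inner). -/
def zeroSetP (g : Polynomial (Polynomial K)) : Set (K × K) :=
  {x | Polynomial.eval₂ (Polynomial.evalRingHom x.1) x.2 g = 0}

/-- The reparametrizing curve `𝔊(P)` has at least one rational component, i.e. some
irreducible factor of its defining polynomial defines a rational curve. -/
def repHasRatComponent (A : K × K) (P : RatFunc K × RatFunc K) : Prop :=
  ∃ g : Polynomial (Polynomial K), Irreducible g ∧ g ∣ repPoly A P ∧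
    IsRationalSet (zeroSetP g)

/-- The reparametrizing curve `𝔊(P)` is rational: its defining polynomial is
irreducible and its zero set admits a rational parametrization. -/
def repIsRational (A : K × K) (P : RatFunc K × RatFunc K) : Prop :=
  Irreducible (repPoly A P) ∧ IsRationalSet (zeroSetP (repPoly A P))

/-- Composition `P ∘ φ` of rational functions. -/
def comp (P φ : RatFunc K) : RatFunc K :=
  Polynomial.aeval φ P.num / Polynomial.aeval φ P.denom

/-- `M` is a simple component of the conchoid: an irreducible component possessing a
nonempty Zariski-dense subset `Ω` such that each `Q ∈ Ω` has exactly one point in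
`π₂(π₁⁻¹(Q))`. -/
def IsSimpleComponent (f : MvPolynomial (Fin 2) K) (A : K × K) (d : K)
    (M : Set (K × K)) : Prop :=
  IsComponent (conchoid f A d) M ∧
  ∃ Ω : Set (K × K), IsDenseIn Ω M ∧
    ∀ Q ∈ Ω, ∃! y : K × K, ∃ l : K, (Q, y, l) ∈ incidence f A d

/-! ### Auxiliary development -/

section AuxDev

open Polynomial

/-- Pointwise evaluation of a rational function. -/
def ev (t : K) (r : RatFunc K) : K := r.num.eval t / r.denom.eval t

/-- `r` is regular (pole-free) at `t`. -/
def Reg (t : K) (r : RatFunc K) : Prop := r.denom.eval t ≠ 0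

lemma reg_ev_of_eq_div {t : K} {p q : K[X]} (hq : q.eval t ≠ 0) {r : RatFunc K}
    (hr : r = algebraMap K[X] (RatFunc K) p / algebraMap K[X] (RatFunc K) q) :
    Reg t r ∧ ev t r = p.eval t / q.eval t := by
  have hq0 : q ≠ 0 := fun h => hq (by simp [h])
  obtain ⟨c, hc⟩ := (RatFunc.denom_dvd hq0).mpr ⟨p, hr⟩
  have hreg : Reg t r := by
    intro h0
    apply hq
    rw [hc, Polynomial.eval_mul, h0, zero_mul]
  refine ⟨hreg, ?_⟩
  have hdne : algebraMap K[X] (RatFunc K) r.denom ≠ 0 :=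
    RatFunc.algebraMap_ne_zero r.denom_ne_zero
  have hqne : algebraMap K[X] (RatFunc K) q ≠ 0 := RatFunc.algebraMap_ne_zero hq0
  have key : r.num * q = p * r.denom := by
    apply RatFunc.algebraMap_injective K
    rw [map_mul, map_mul]
    have h2 : algebraMap K[X] (RatFunc K) r.num = r * algebraMap K[X] (RatFunc K) r.denom := by
      rw [← div_eq_iff hdne]
      exact r.num_div_denom
    rw [h2, hr, div_mul_eq_mul_div, div_mul_eq_mul_div, div_eq_iff hqne]
  have hkey : r.num.eval t * q.eval t = p.eval t * r.denom.eval t := by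
    have := congrArg (Polynomial.eval t) key
    simpa using this
  rw [ev, div_eq_div_iff hreg hq]
  exact hkey

lemma reg_ev_algebraMap (t : K) (p : K[X]) :
    Reg t (algebraMap K[X] (RatFunc K) p) ∧ ev t (algebraMap K[X] (RatFunc K) p) = p.eval t := by
  have h := reg_ev_of_eq_div (t := t) (p := p) (q := 1) (by simp)
    (r := algebraMap K[X] (RatFunc K) p) (by simp)
  simpa using h

lemma reg_ev_C (t : K) (c : K) :
    Reg t (RatFunc.C c) ∧ ev t (RatFunc.C c) = c := by
  have := reg_ev_algebraMap t (Polynomial.C c)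
  rw [RatFunc.algebraMap_C] at this
  simpa using this

lemma reg_ev_add {t : K} {r s : RatFunc K} (hr : Reg t r) (hs : Reg t s) :
    Reg t (r + s) ∧ ev t (r + s) = ev t r + ev t s := by
  have hdne : algebraMap K[X] (RatFunc K) r.denom ≠ 0 :=
    RatFunc.algebraMap_ne_zero r.denom_ne_zero
  have hsne : algebraMap K[X] (RatFunc K) s.denom ≠ 0 :=
    RatFunc.algebraMap_ne_zero s.denom_ne_zero
  have e : r + s = algebraMap K[X] (RatFunc K) (r.num * s.denom + r.denom * s.num) /
      algebraMap K[X] (RatFunc K) (r.denom * s.denom) := by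
    conv_lhs => rw [← RatFunc.num_div_denom r, ← RatFunc.num_div_denom s]
    rw [div_add_div _ _ hdne hsne, map_add, map_mul, map_mul, map_mul]
  have h := reg_ev_of_eq_div (t := t)
    (hq := by simpa using mul_ne_zero hr hs) e
  refine ⟨h.1, ?_⟩
  have hr' : r.denom.eval t ≠ 0 := hr
  have hs' : s.denom.eval t ≠ 0 := hs
  rw [h.2, ev, ev]
  simp only [Polynomial.eval_add, Polynomial.eval_mul]
  field_simp

lemma reg_ev_mul {t : K} {r s : RatFunc K} (hr : Reg t r) (hs : Reg t s) :
    Reg t (r * s) ∧ ev t (r * s) = ev t r * ev t s := by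
  have e : r * s = algebraMap K[X] (RatFunc K) (r.num * s.num) /
      algebraMap K[X] (RatFunc K) (r.denom * s.denom) := by
    conv_lhs => rw [← RatFunc.num_div_denom r, ← RatFunc.num_div_denom s]
    rw [div_mul_div_comm, map_mul, map_mul]
  have h := reg_ev_of_eq_div (t := t)
    (hq := by simpa using mul_ne_zero hr hs) e
  refine ⟨h.1, ?_⟩
  have hr' : r.denom.eval t ≠ 0 := hr
  have hs' : s.denom.eval t ≠ 0 := hs
  rw [h.2, ev, ev]
  simp only [Polynomial.eval_mul]
  field_simp

lemma ev_zero (t : K) : ev t (0 : RatFunc K) = 0 := by simp [ev]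

lemma reg_ev_aeval {t : K} {u : RatFunc K} (hu : Reg t u) (p : K[X]) :
    Reg t (Polynomial.aeval u p) ∧ ev t (Polynomial.aeval u p) = p.eval (ev t u) := by
  induction p using Polynomial.induction_on with
  | C c => simpa using reg_ev_C t c
  | add p q hp hq =>
      have h := reg_ev_add hp.1 hq.1
      rw [map_add]
      refine ⟨h.1, ?_⟩
      rw [h.2, hp.2, hq.2, Polynomial.eval_add]
  | monomial n a ih =>
      have e : Polynomial.C a * Polynomial.X ^ (n + 1)
          = Polynomial.C a * Polynomial.X ^ n * Polynomial.X := by ring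
      rw [e, map_mul, Polynomial.aeval_X]
      have h := reg_ev_mul ih.1 hu
      refine ⟨h.1, ?_⟩
      rw [h.2, ih.2]
      simp [Polynomial.eval_mul]

/-- Functional evaluation of a bivariate polynomial (`x₂` outer) at a pair of
rational functions. -/
def Erat (h : Polynomial (Polynomial K)) (u v : RatFunc K) : RatFunc K :=
  Polynomial.eval₂ ((Polynomial.aeval u : K[X] →ₐ[K] RatFunc K) : K[X] →+* RatFunc K) v h

lemma Erat_add (p q : Polynomial (Polynomial K)) (u v : RatFunc K) :
    Erat (p + q) u v = Erat p u v + Erat q u v := by simp [Erat]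

lemma Erat_mul (p q : Polynomial (Polynomial K)) (u v : RatFunc K) :
    Erat (p * q) u v = Erat p u v * Erat q u v := by simp [Erat]

lemma Erat_X (u v : RatFunc K) : Erat (Polynomial.X) u v = v := by simp [Erat]

lemma Erat_C (p : Polynomial K) (u v : RatFunc K) :
    Erat (Polynomial.C p) u v = Polynomial.aeval u p := by simp [Erat]

lemma reg_ev_Erat {t : K} {u v : RatFunc K} (hu : Reg t u) (hv : Reg t v)
    (h : Polynomial (Polynomial K)) :
    Reg t (Erat h u v) ∧
      ev t (Erat h u v) = Polynomial.eval₂ (Polynomial.evalRingHom (ev t u)) (ev t v) h := by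
  induction h using Polynomial.induction_on with
  | C p =>
      have := reg_ev_aeval hu p
      simpa [Erat] using this
  | add p q hp hq =>
      have h2 := reg_ev_add hp.1 hq.1
      rw [Erat_add]
      refine ⟨h2.1, ?_⟩
      rw [h2.2, hp.2, hq.2, Polynomial.eval₂_add]
  | monomial n a ih =>
      have e : Polynomial.C a * Polynomial.X ^ (n + 1)
          = Polynomial.C a * Polynomial.X ^ n * Polynomial.X := by ring
      rw [e, Erat_mul, Erat_X]
      have h2 := reg_ev_mul ih.1 hv
      refine ⟨h2.1, ?_⟩
      rw [h2.2, ih.2]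
      simp [Polynomial.eval₂_mul]

lemma eq_zero_of_ev_zero {r : RatFunc K} {S : Set K} (hS : S.Infinite)
    (h : ∀ t ∈ S, Reg t r ∧ ev t r = 0) : r = 0 := by
  have hnum : ∀ t ∈ S, r.num.IsRoot t := by
    intro t ht
    obtain ⟨h1, h2⟩ := h t ht
    rw [ev, _root_.div_eq_zero_iff] at h2
    rcases h2 with h2 | h2
    · exact h2
    · exact absurd h2 h1
  have : r.num = 0 := by
    by_contra hne
    exact (hS.mono hnum) (Polynomial.finite_setOf_isRoot hne)
  rwa [← RatFunc.num_eq_zero_iff]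

lemma infinite_reg₂ [CharZero K] (r s : RatFunc K) : {t : K | Reg t r ∧ Reg t s}.Infinite := by
  have hsub : {t : K | Reg t r ∧ Reg t s}ᶜ ⊆
      {t : K | r.denom.IsRoot t} ∪ {t : K | s.denom.IsRoot t} := by
    intro t ht
    simp only [Set.mem_compl_iff, Set.mem_setOf_eq, not_and_or, Reg, not_not] at ht
    rcases ht with ht | ht
    · exact Or.inl ht
    · exact Or.inr ht
  have hfin : ({t : K | Reg t r ∧ Reg t s}ᶜ).Finite :=
    Set.Finite.subset ((Polynomial.finite_setOf_isRoot r.denom_ne_zero).union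
      (Polynomial.finite_setOf_isRoot s.denom_ne_zero)) hsub
  exact Set.infinite_of_finite_compl hfin

lemma polesAvoided_iff (P : RatFunc K × RatFunc K) (t : K) :
    PolesAvoided P t ↔ Reg t P.1 ∧ Reg t P.2 := Iff.rfl

lemma ratPoint_eq (P : RatFunc K × RatFunc K) (t : K) :
    ratPoint P t = (ev t P.1, ev t P.2) := rfl

end AuxDev


section AuxGam

open Polynomial

variable [IsAlgClosed K]

/-- `u` is a nonconstant rational function. -/
def NotC (u : RatFunc K) : Prop := ∀ c : K, u ≠ RatFunc.C c

lemma aeval_ne_zero_of_notC {u : RatFunc K} (hu : NotC u) {p : K[X]} (hp : p ≠ 0) :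
    Polynomial.aeval u p ≠ 0 := by
  intro h0
  have halg : IsAlgebraic K u := ⟨p, hp, h0⟩
  have hint : IsIntegral K u := halg.isIntegral
  have hdeg : (minpoly K u).degree = 1 :=
    IsAlgClosed.degree_eq_one_of_irreducible K (minpoly.irreducible hint)
  have hmin := minpoly.aeval K u
  rw [Polynomial.eq_X_add_C_of_degree_eq_one hdeg] at hmin
  have hlc : (minpoly K u).leadingCoeff = 1 := (minpoly.monic hint)
  rw [hlc, map_add, map_mul, Polynomial.aeval_X, Polynomial.aeval_C, Polynomial.aeval_C,
    map_one, one_mul] at hmin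
  have : u = RatFunc.C (-(minpoly K u).coeff 0) := by
    rw [← RatFunc.algebraMap_eq_C, map_neg, eq_neg_iff_add_eq_zero]
    exact hmin
  exact hu _ this

lemma aeval_injective_of_notC {u : RatFunc K} (hu : NotC u) :
    Function.Injective ((Polynomial.aeval u : K[X] →ₐ[K] RatFunc K) : K[X] →+* RatFunc K) := by
  intro p q h
  by_contra hne
  apply aeval_ne_zero_of_notC hu (sub_ne_zero.mpr hne)
  rw [map_sub, sub_eq_zero]
  exact h

/-- Substitution `r(x) ↦ r(u)` as a field homomorphism of `K(x)`. -/
noncomputable def Gam (u : RatFunc K) (hu : NotC u) : RatFunc K →+* RatFunc K :=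
  IsFractionRing.lift (aeval_injective_of_notC hu)

lemma Gam_algebraMap (u : RatFunc K) (hu : NotC u) (p : K[X]) :
    Gam u hu (algebraMap K[X] (RatFunc K) p) = Polynomial.aeval u p :=
  IsFractionRing.lift_algebraMap _ _

lemma Gam_C (u : RatFunc K) (hu : NotC u) (c : K) :
    Gam u hu (RatFunc.C c) = RatFunc.C c := by
  have h := Gam_algebraMap u hu (Polynomial.C c)
  rw [RatFunc.algebraMap_C] at h
  simp only [Polynomial.aeval_C, RatFunc.algebraMap_eq_C] at h
  exact h

lemma Gam_X (u : RatFunc K) (hu : NotC u) : Gam u hu RatFunc.X = u := by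
  rw [← RatFunc.algebraMap_X, Gam_algebraMap, Polynomial.aeval_X]

lemma ratfunc_hom_ext {L : Type*} [Field L] {f g : RatFunc K →+* L}
    (hC : ∀ c : K, f (RatFunc.C c) = g (RatFunc.C c)) (hX : f RatFunc.X = g RatFunc.X) :
    f = g := by
  apply IsLocalization.ringHom_ext (nonZeroDivisors K[X])
  apply Polynomial.ringHom_ext
  · intro a
    simpa [RatFunc.algebraMap_C] using hC a
  · simpa [RatFunc.algebraMap_X] using hX

end AuxGam

section AuxSigma

open Polynomial

/-- Translation of bivariate `MvPolynomial`s to `K[x₁][x₂]` (`x₂` outer). -/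
noncomputable def Tm : MvPolynomial (Fin 2) K →+* Polynomial (Polynomial K) :=
  MvPolynomial.eval₂Hom (Polynomial.C.comp Polynomial.C)
    ![Polynomial.C Polynomial.X, Polynomial.X]

lemma Tm_eval (F : MvPolynomial (Fin 2) K) (a b : K) :
    MvPolynomial.eval ![a, b] F = Polynomial.eval₂ (Polynomial.evalRingHom a) b (Tm F) := by
  have h : (MvPolynomial.eval ![a, b] : MvPolynomial (Fin 2) K →+* K)
      = (Polynomial.eval₂RingHom (Polynomial.evalRingHom a) b).comp Tm := by
    apply MvPolynomial.ringHom_ext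
    · intro c
      simp [Tm]
    · intro i
      fin_cases i <;> simp [Tm]
  have := RingHom.congr_fun h F
  simpa using this

lemma Tm_aeval (F : MvPolynomial (Fin 2) K) (u v : RatFunc K) :
    (MvPolynomial.aeval ![u, v] F : RatFunc K) = Erat (Tm F) u v := by
  have h : ((MvPolynomial.aeval ![u, v] : MvPolynomial (Fin 2) K →ₐ[K] RatFunc K) :
        MvPolynomial (Fin 2) K →+* RatFunc K)
      = (Polynomial.eval₂RingHom
          ((Polynomial.aeval u : K[X] →ₐ[K] RatFunc K) : K[X] →+* RatFunc K) v).comp Tm := by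
    apply MvPolynomial.ringHom_ext
    · intro c
      simp [Tm]
    · intro i
      fin_cases i <;> simp [Tm]
  have := RingHom.congr_fun h F
  simpa [Erat] using this

variable [CharZero K]

lemma ker_t1 {P : RatFunc K × RatFunc K} (F : MvPolynomial (Fin 2) K)
    (hF : MvPolynomial.aeval ![P.1, P.2] F = 0) : Erat (Tm F) P.1 P.2 = 0 := by
  rw [← Tm_aeval]; exact hF

lemma ker_t2 {S : Set (K × K)} {P : RatFunc K × RatFunc K}
    (hP : IsParamOf S P) (F : MvPolynomial (Fin 2) K)
    (hE : Erat (Tm F) P.1 P.2 = 0) :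
    ∀ y ∈ paramImage P, MvPolynomial.eval ![y.1, y.2] F = 0 := by
  rintro y ⟨t, ht, rfl⟩
  have h3 := reg_ev_Erat ht.1 ht.2 (Tm F)
  rw [ratPoint_eq]
  rw [Tm_eval, ← h3.2, hE, ev_zero]

lemma ker_t3 {S : Set (K × K)} {P Q : RatFunc K × RatFunc K}
    (hP : IsParamOf S P) (hQ : IsParamOf S Q) (F : MvPolynomial (Fin 2) K)
    (hSv : ∀ y ∈ S, MvPolynomial.eval ![y.1, y.2] F = 0) :
    MvPolynomial.aeval ![Q.1, Q.2] F = 0 := by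
  rw [Tm_aeval]
  apply eq_zero_of_ev_zero (infinite_reg₂ Q.1 Q.2)
  intro t ht
  have h3 := reg_ev_Erat ht.1 ht.2 (Tm F)
  refine ⟨h3.1, ?_⟩
  have hy : (ratPoint Q t) ∈ S := hQ.2.1 ⟨t, ht, rfl⟩
  have h5 := hSv _ hy
  rw [ratPoint_eq] at h5
  rw [h3.2, ← Tm_eval]
  exact h5

lemma ker_le_ker {S : Set (K × K)} {P Q : RatFunc K × RatFunc K}
    (hP : IsParamOf S P) (hQ : IsParamOf S Q) (F : MvPolynomial (Fin 2) K)
    (hF : MvPolynomial.aeval ![P.1, P.2] F = 0) :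
    MvPolynomial.aeval ![Q.1, Q.2] F = 0 :=
  ker_t3 hP hQ F (fun y hy => hP.2.2 hy F (ker_t2 hP F (ker_t1 F hF)))

set_option maxHeartbeats 1000000 in
set_option synthInstance.maxHeartbeats 200000 in
lemma exists_ringEquiv_of_ker {R₀ : Type*} [CommRing R₀]
    (ψP ψQ : R₀ →+* RatFunc K)
    (hker : ∀ a, ψP a = 0 ↔ ψQ a = 0)
    (hrP : Subfield.closure (ψP.range : Set (RatFunc K)) = ⊤)
    (hrQ : Subfield.closure (ψQ.range : Set (RatFunc K)) = ⊤) :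
    ∃ σ : RatFunc K ≃+* RatFunc K, ∀ a, σ (ψP a) = ψQ a := by
  classical
  let I : Ideal R₀ := RingHom.ker ψP
  haveI hIp : I.IsPrime := RingHom.ker_isPrime _
  let gP : (R₀ ⧸ I) →+* RatFunc K :=
    Ideal.Quotient.lift I ψP (fun a ha => RingHom.mem_ker.mp ha)
  let gQ : (R₀ ⧸ I) →+* RatFunc K :=
    Ideal.Quotient.lift I ψQ (fun a ha => (hker a).mp (RingHom.mem_ker.mp ha))
  have hgPmk : ∀ x, gP (Ideal.Quotient.mk I x) = ψP x := fun x => rfl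
  have hgQmk : ∀ x, gQ (Ideal.Quotient.mk I x) = ψQ x := fun x => rfl
  have hgPinj : Function.Injective gP := by
    rw [injective_iff_map_eq_zero]
    intro a ha
    obtain ⟨x, rfl⟩ := Ideal.Quotient.mk_surjective a
    rw [hgPmk] at ha
    rw [Ideal.Quotient.eq_zero_iff_mem]
    exact RingHom.mem_ker.mpr ha
  have hgQinj : Function.Injective gQ := by
    rw [injective_iff_map_eq_zero]
    intro a ha
    obtain ⟨x, rfl⟩ := Ideal.Quotient.mk_surjective a
    rw [hgQmk] at ha
    rw [Ideal.Quotient.eq_zero_iff_mem]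
    exact RingHom.mem_ker.mpr ((hker x).mpr ha)
  have hrangeP : gP.range = ψP.range := by
    ext y
    constructor
    · rintro ⟨a, rfl⟩
      obtain ⟨x, rfl⟩ := Ideal.Quotient.mk_surjective a
      exact ⟨x, (hgPmk x).symm⟩
    · rintro ⟨x, rfl⟩
      exact ⟨Ideal.Quotient.mk I x, hgPmk x⟩
  have hrangeQ : gQ.range = ψQ.range := by
    ext y
    constructor
    · rintro ⟨a, rfl⟩
      obtain ⟨x, rfl⟩ := Ideal.Quotient.mk_surjective a
      exact ⟨x, (hgQmk x).symm⟩
    · rintro ⟨x, rfl⟩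
      exact ⟨Ideal.Quotient.mk I x, hgQmk x⟩
  let ιP : FractionRing (R₀ ⧸ I) →+* RatFunc K := IsFractionRing.lift hgPinj
  let ιQ : FractionRing (R₀ ⧸ I) →+* RatFunc K := IsFractionRing.lift hgQinj
  have hsurjP : Function.Surjective ιP := by
    rw [← RingHom.fieldRange_eq_top_iff, IsFractionRing.lift_fieldRange, hrangeP, hrP]
  have hsurjQ : Function.Surjective ιQ := by
    rw [← RingHom.fieldRange_eq_top_iff, IsFractionRing.lift_fieldRange, hrangeQ, hrQ]
  let eP : FractionRing (R₀ ⧸ I) ≃+* RatFunc K :=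
    RingEquiv.ofBijective ιP ⟨ιP.injective, hsurjP⟩
  let eQ : FractionRing (R₀ ⧸ I) ≃+* RatFunc K :=
    RingEquiv.ofBijective ιQ ⟨ιQ.injective, hsurjQ⟩
  refine ⟨eP.symm.trans eQ, ?_⟩
  intro a
  have h1 : eP (algebraMap _ (FractionRing (R₀ ⧸ I)) (Ideal.Quotient.mk I a)) = ψP a := by
    show ιP _ = _
    rw [IsFractionRing.lift_algebraMap]
    exact hgPmk a
  rw [RingEquiv.coe_trans, Function.comp_apply, ← h1, RingEquiv.symm_apply_apply]
  show ιQ _ = _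
  rw [IsFractionRing.lift_algebraMap]
  exact hgQmk a

lemma exists_sigma [IsAlgClosed K] {S : Set (K × K)} {P Q : RatFunc K × RatFunc K}
    (hP : IsParamOf S P) (hQ : IsParamOf S Q) (hPp : IsProper P) (hQp : IsProper Q) :
    ∃ σ : RatFunc K ≃+* RatFunc K,
      (∀ c : K, σ (RatFunc.C c) = RatFunc.C c) ∧ σ P.1 = Q.1 ∧ σ P.2 = Q.2 := by
  have hclos : ∀ R : RatFunc K × RatFunc K, IsProper R →
      Subfield.closure
        (((MvPolynomial.aeval ![R.1, R.2] : MvPolynomial (Fin 2) K →ₐ[K] RatFunc K) :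
          MvPolynomial (Fin 2) K →+* RatFunc K).range : Set (RatFunc K)) = ⊤ := by
    intro R hR
    have hgen : Set.range (algebraMap K (RatFunc K)) ∪ {R.1, R.2} ⊆
        ((((MvPolynomial.aeval ![R.1, R.2] : MvPolynomial (Fin 2) K →ₐ[K] RatFunc K) :
          MvPolynomial (Fin 2) K →+* RatFunc K)).range : Set (RatFunc K)) := by
      rintro x (⟨c, rfl⟩ | hx)
      · exact ⟨MvPolynomial.C c, by simp⟩
      · rcases hx with rfl | rfl
        · exact ⟨MvPolynomial.X 0, by simp⟩
        · exact ⟨MvPolynomial.X 1, by simp⟩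
    have hcl : Subfield.closure (Set.range (algebraMap K (RatFunc K)) ∪ {R.1, R.2})
        = (⊤ : Subfield (RatFunc K)) := by
      rw [← IntermediateField.adjoin_toSubfield, hR, IntermediateField.top_toSubfield]
    have := Subfield.closure_mono hgen
    rw [hcl] at this
    exact top_le_iff.mp this
  obtain ⟨σ, hσ⟩ := exists_ringEquiv_of_ker
    ((MvPolynomial.aeval ![P.1, P.2] : MvPolynomial (Fin 2) K →ₐ[K] RatFunc K) :
      MvPolynomial (Fin 2) K →+* RatFunc K)
    ((MvPolynomial.aeval ![Q.1, Q.2] : MvPolynomial (Fin 2) K →ₐ[K] RatFunc K) :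
      MvPolynomial (Fin 2) K →+* RatFunc K)
    (fun F => ⟨fun h => ker_le_ker hP hQ F h, fun h => ker_le_ker hQ hP F h⟩)
    (hclos P hPp) (hclos Q hQp)
  refine ⟨σ, ?_, ?_, ?_⟩
  · intro c
    have := hσ (MvPolynomial.C c)
    simpa [RatFunc.algebraMap_eq_C] using this
  · have := hσ (MvPolynomial.X 0)
    simpa using this
  · have := hσ (MvPolynomial.X 1)
    simpa using this

end AuxSigma


section AuxTransfer

open Polynomial

variable [IsAlgClosed K] [CharZero K]

lemma ratX_ne_C (c : K) : (RatFunc.X : RatFunc K) ≠ RatFunc.C c := by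
  intro h
  rw [← RatFunc.algebraMap_X, ← RatFunc.algebraMap_C] at h
  exact Polynomial.X_ne_C c (RatFunc.algebraMap_injective K h)

lemma Gam_comp_algebraMap (u : RatFunc K) (hu : NotC u) :
    (Gam u hu).comp (algebraMap K[X] (RatFunc K)) =
      ((Polynomial.aeval u : K[X] →ₐ[K] RatFunc K) : K[X] →+* RatFunc K) :=
  RingHom.ext (Gam_algebraMap u hu)

lemma Erat_eq (h : Polynomial (Polynomial K)) (u : RatFunc K) (hu : NotC u) (v : RatFunc K) :
    Erat h u v = Polynomial.eval₂ (Gam u hu) v (h.map (algebraMap K[X] (RatFunc K))) := by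
  rw [Polynomial.eval₂_map, Gam_comp_algebraMap]
  rfl

lemma Erat_zero_of_param {g : Polynomial (Polynomial K)} {χ : RatFunc K × RatFunc K}
    (hχ : IsParamOf (zeroSetP g) χ) : Erat g χ.1 χ.2 = 0 := by
  apply eq_zero_of_ev_zero (infinite_reg₂ χ.1 χ.2)
  intro t ht
  have h3 := reg_ev_Erat ht.1 ht.2 g
  refine ⟨h3.1, ?_⟩
  have hmem : ratPoint χ t ∈ zeroSetP g := hχ.2.1 ⟨t, ht, rfl⟩
  rw [h3.2]
  exact hmem

lemma notC_fst_of_param {g : Polynomial (Polynomial K)}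
    (hgprim : g.IsPrimitive) {χ : RatFunc K × RatFunc K}
    (hχ : IsParamOf (zeroSetP g) χ) : NotC χ.1 := by
  intro c hc
  have hχ2 : NotC χ.2 := fun c2 hc2 => hχ.1 ⟨(c, c2), hc, hc2⟩
  have hE := Erat_zero_of_param hχ
  rw [hc] at hE
  have hkey : Erat g (RatFunc.C c) χ.2 =
      Polynomial.aeval χ.2 (g.map (Polynomial.evalRingHom c)) := by
    show Polynomial.eval₂ _ χ.2 g = Polynomial.aeval χ.2 (g.map (Polynomial.evalRingHom c))
    rw [Polynomial.aeval_def, Polynomial.eval₂_map]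
    congr 1
    apply Polynomial.ringHom_ext <;> simp [RatFunc.algebraMap_eq_C]
  rw [hkey] at hE
  have hmap0 : g.map (Polynomial.evalRingHom c) = 0 := by
    by_contra hne
    exact aeval_ne_zero_of_notC hχ2 hne hE
  have hCd : Polynomial.C (Polynomial.X - Polynomial.C c) ∣ g := by
    rw [Polynomial.C_dvd_iff_dvd_coeff]
    intro i
    rw [Polynomial.dvd_iff_isRoot]
    have := congrArg (fun p => Polynomial.coeff p i) hmap0
    simpa [Polynomial.coeff_map] using this
  have hdvd := Polynomial.dvd_content_iff_C_dvd.mpr hCd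
  rw [hgprim.content_eq_one] at hdvd
  exact Polynomial.not_isUnit_X_sub_C c (isUnit_of_dvd_one hdvd)

lemma dvd_of_Erat_zero {g' : Polynomial (Polynomial K)} (hirr : Irreducible g')
    (hprim : g'.IsPrimitive) {u v : RatFunc K} (hu : NotC u)
    (h1 : Erat g' u v = 0) (h : Polynomial (Polynomial K)) (h2 : Erat h u v = 0) :
    g' ∣ h := by
  by_cases hh : h = 0
  · simp [hh]
  have hgm : Irreducible (g'.map (algebraMap K[X] (RatFunc K))) :=
    (hprim.irreducible_iff_irreducible_map_fraction_map).mp hirr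
  by_contra hnd
  have hnd' : ¬ g'.map (algebraMap K[X] (RatFunc K)) ∣ h.map (algebraMap K[X] (RatFunc K)) := by
    intro hd
    apply hnd
    have hc : h.map (algebraMap K[X] (RatFunc K)) =
        Polynomial.C (algebraMap K[X] (RatFunc K) h.content) *
          (h.primPart.map (algebraMap K[X] (RatFunc K))) := by
      conv_lhs => rw [h.eq_C_content_mul_primPart]
      rw [Polynomial.map_mul, Polynomial.map_C]
    have hcne : h.content ≠ 0 := fun h0 => hh (Polynomial.content_eq_zero_iff.mp h0)
    have hcu : IsUnit (Polynomial.C (algebraMap K[X] (RatFunc K) h.content)) :=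
      Polynomial.isUnit_C.mpr (isUnit_iff_ne_zero.mpr (RatFunc.algebraMap_ne_zero hcne))
    rw [hc] at hd
    have hd2 : g'.map (algebraMap K[X] (RatFunc K)) ∣
        h.primPart.map (algebraMap K[X] (RatFunc K)) := (hcu.dvd_mul_left).mp hd
    exact (hprim.dvd_of_fraction_map_dvd_fraction_map hd2).trans
      h.primPart_dvd
  have hco : IsCoprime (g'.map (algebraMap K[X] (RatFunc K)))
      (h.map (algebraMap K[X] (RatFunc K))) := (hgm.coprime_iff_not_dvd).mpr hnd'
  obtain ⟨a, b, hab⟩ := hco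
  have hev := congrArg (Polynomial.eval₂ (Gam u hu) v) hab
  rw [Polynomial.eval₂_add, Polynomial.eval₂_mul, Polynomial.eval₂_mul, Polynomial.eval₂_one,
    ← Erat_eq g' u hu v, ← Erat_eq h u hu v, h1, h2, mul_zero, mul_zero, add_zero] at hev
  exact zero_ne_one hev

/-- Transfer of a rational component along the coefficient automorphism `σ`. -/
lemma isRationalSet_transfer (σ : RatFunc K ≃+* RatFunc K)
    (hσC : ∀ c : K, σ (RatFunc.C c) = RatFunc.C c)
    {g g' : Polynomial (Polynomial K)} (hgprim : g.IsPrimitive)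
    (hg'irr : Irreducible g') (hg'prim : g'.IsPrimitive)
    {e : RatFunc K} (he : e ≠ 0)
    (heq : g'.map (algebraMap K[X] (RatFunc K)) =
      Polynomial.C e * ((g.map (algebraMap K[X] (RatFunc K))).map (σ : RatFunc K →+* RatFunc K)))
    (hgrat : IsRationalSet (zeroSetP g)) : IsRationalSet (zeroSetP g') := by
  obtain ⟨χ, hχ⟩ := hgrat
  have hχ1 : NotC χ.1 := notC_fst_of_param hgprim hχ
  have hE : Erat g χ.1 χ.2 = 0 := Erat_zero_of_param hχ
  have hsymC : ∀ c : K, σ.symm (RatFunc.C c) = RatFunc.C c := by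
    intro c
    apply σ.injective
    rw [RingEquiv.apply_symm_apply, hσC]
  set θ : RatFunc K := σ.symm RatFunc.X with hθdef
  have hθ : NotC θ := by
    intro c hc
    apply ratX_ne_C c
    have := congrArg σ hc
    rw [hθdef, RingEquiv.apply_symm_apply, hσC] at this
    exact this
  set ρ₁ : RatFunc K := Gam χ.1 hχ1 θ with hρdef
  have hρ₁ : NotC ρ₁ := by
    intro c hc
    apply hθ c
    apply (Gam χ.1 hχ1).injective
    rw [← hρdef, hc, Gam_C]
  have hGamθ : Gam θ hθ = (σ.symm : RatFunc K ≃+* RatFunc K) := by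
    apply ratfunc_hom_ext
    · intro c
      rw [Gam_C]
      exact (hsymC c).symm
    · rw [Gam_X]
      rfl
  have hcomp1 : (Gam χ.1 hχ1).comp (Gam θ hθ) = Gam ρ₁ hρ₁ := by
    apply ratfunc_hom_ext
    · intro c
      simp [Gam_C]
    · simp [Gam_X]
      rfl
  have hcomp2 : (Gam ρ₁ hρ₁).comp (σ : RatFunc K →+* RatFunc K) = Gam χ.1 hχ1 := by
    apply ratfunc_hom_ext
    · intro c
      show Gam ρ₁ hρ₁ (σ (RatFunc.C c)) = _
      rw [hσC, Gam_C, Gam_C]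
    · show Gam ρ₁ hρ₁ (σ RatFunc.X) = Gam χ.1 hχ1 RatFunc.X
      rw [Gam_X]
      have h4 : Gam ρ₁ hρ₁ (σ RatFunc.X) = Gam χ.1 hχ1 (Gam θ hθ (σ RatFunc.X)) := by
        rw [← hcomp1]
        rfl
      rw [h4, hGamθ]
      show Gam χ.1 hχ1 (σ.symm (σ RatFunc.X)) = χ.1
      rw [RingEquiv.symm_apply_apply, Gam_X]
  have hEg' : Erat g' ρ₁ χ.2 = 0 := by
    rw [Erat_eq g' ρ₁ hρ₁ χ.2, heq, Polynomial.eval₂_mul, Polynomial.eval₂_C,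
      Polynomial.eval₂_map, hcomp2, ← Erat_eq g χ.1 hχ1 χ.2, hE, mul_zero]
  refine ⟨(ρ₁, χ.2), ?_, ?_, ?_⟩
  · rintro ⟨c, hc1, hc2⟩
    exact hρ₁ c.1 hc1
  · rintro x ⟨t, ht, rfl⟩
    have h3 := reg_ev_Erat (t := t) (u := ρ₁) (v := χ.2) ht.1 ht.2 g'
    show Polynomial.eval₂ (Polynomial.evalRingHom (ev t ρ₁)) (ev t χ.2) g' = 0
    rw [← h3.2, hEg', ev_zero]
  · intro x hx F hF
    have hTF : Erat (Tm F) ρ₁ χ.2 = 0 := by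
      apply eq_zero_of_ev_zero (infinite_reg₂ ρ₁ χ.2)
      intro t ht
      have h3 := reg_ev_Erat (t := t) (u := ρ₁) (v := χ.2) ht.1 ht.2 (Tm F)
      refine ⟨h3.1, ?_⟩
      have h5 := hF _ ⟨t, ht, rfl⟩
      rw [ratPoint_eq] at h5
      rw [h3.2, ← Tm_eval]
      exact h5
    obtain ⟨k, hk⟩ := dvd_of_Erat_zero hg'irr hg'prim hρ₁ hEg' (Tm F) hTF
    have hx' : Polynomial.eval₂ (Polynomial.evalRingHom x.1) x.2 g' = 0 := hx
    rw [Tm_eval, hk, Polynomial.eval₂_mul, hx', zero_mul]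

end AuxTransfer


section AuxMain

open Polynomial

variable [IsAlgClosed K] [CharZero K]

lemma am_num (r : RatFunc K) :
    algebraMap K[X] (RatFunc K) r.num = r * algebraMap K[X] (RatFunc K) r.denom :=
  (div_eq_iff (RatFunc.algebraMap_ne_zero r.denom_ne_zero)).mp r.num_div_denom

/-- `−2x₂(R₁−a) + (x₂²−1)(R₂−b)` over the rational function field. -/
def RP (A : K × K) (R : RatFunc K × RatFunc K) : Polynomial (RatFunc K) :=
  Polynomial.C (R.2 - RatFunc.C A.2) * (Polynomial.X ^ 2 - 1) +
    Polynomial.C (-2 * (R.1 - RatFunc.C A.1)) * Polynomial.X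

lemma map_repNum (A : K × K) (R : RatFunc K × RatFunc K) :
    (repNum A R).map (algebraMap K[X] (RatFunc K)) =
      Polynomial.C (algebraMap K[X] (RatFunc K)
        ((R.1 - RatFunc.C A.1).denom * (R.2 - RatFunc.C A.2).denom)) * RP A R := by
  have e2 : algebraMap K[X] (RatFunc K) ((R.2 - RatFunc.C A.2).num * (R.1 - RatFunc.C A.1).denom)
      = (R.2 - RatFunc.C A.2) * (algebraMap K[X] (RatFunc K)
        ((R.1 - RatFunc.C A.1).denom * (R.2 - RatFunc.C A.2).denom)) := by
    rw [map_mul, map_mul, am_num]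
    ring
  have e1 : algebraMap K[X] (RatFunc K)
        (-2 * ((R.1 - RatFunc.C A.1).num * (R.2 - RatFunc.C A.2).denom))
      = (-2 * (R.1 - RatFunc.C A.1)) * (algebraMap K[X] (RatFunc K)
        ((R.1 - RatFunc.C A.1).denom * (R.2 - RatFunc.C A.2).denom)) := by
    rw [map_mul, map_mul, map_mul, am_num, map_neg, map_ofNat]
    ring
  unfold repNum RP
  rw [Polynomial.map_add, Polynomial.map_mul, Polynomial.map_mul, Polynomial.map_C,
    Polynomial.map_C, Polynomial.map_sub, Polynomial.map_pow, Polynomial.map_X,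
    Polynomial.map_one, e2, e1, Polynomial.C_mul, Polynomial.C_mul]
  ring

lemma map_sigma_RP (σ : RatFunc K ≃+* RatFunc K)
    (hσC : ∀ c : K, σ (RatFunc.C c) = RatFunc.C c) (A : K × K)
    {P Q : RatFunc K × RatFunc K} (hσ1 : σ P.1 = Q.1) (hσ2 : σ P.2 = Q.2) :
    (RP A P).map (σ : RatFunc K →+* RatFunc K) = RP A Q := by
  have e2 : (σ : RatFunc K →+* RatFunc K) (P.2 - RatFunc.C A.2) = Q.2 - RatFunc.C A.2 := by
    rw [map_sub]
    show σ P.2 - σ (RatFunc.C A.2) = _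
    rw [hσ2, hσC]
  have e1 : (σ : RatFunc K →+* RatFunc K) (-2 * (P.1 - RatFunc.C A.1))
      = -2 * (Q.1 - RatFunc.C A.1) := by
    rw [map_mul, map_sub, map_neg, map_ofNat]
    show -2 * (σ P.1 - σ (RatFunc.C A.1)) = _
    rw [hσ1, hσC]
  unfold RP
  rw [Polynomial.map_add, Polynomial.map_mul, Polynomial.map_mul, Polynomial.map_C,
    Polynomial.map_C, Polynomial.map_sub, Polynomial.map_pow, Polynomial.map_X,
    Polynomial.map_one, e1, e2]

lemma repNum_coeff_two (A : K × K) (R : RatFunc K × RatFunc K) :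
    (repNum A R).coeff 2 = (R.2 - RatFunc.C A.2).num * (R.1 - RatFunc.C A.1).denom := by
  rw [repNum, Polynomial.coeff_add, Polynomial.coeff_C_mul, Polynomial.coeff_C_mul]
  norm_num [Polynomial.coeff_sub, Polynomial.coeff_X_pow, Polynomial.coeff_one,
    Polynomial.coeff_X]

lemma repNum_coeff_one (A : K × K) (R : RatFunc K × RatFunc K) :
    (repNum A R).coeff 1 = -2 * ((R.1 - RatFunc.C A.1).num * (R.2 - RatFunc.C A.2).denom) := by
  rw [repNum, Polynomial.coeff_add, Polynomial.coeff_C_mul, Polynomial.coeff_C_mul]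
  norm_num [Polynomial.coeff_sub, Polynomial.coeff_X_pow, Polynomial.coeff_one,
    Polynomial.coeff_X]

lemma repHasRat_transfer (A : K × K) {P Q : RatFunc K × RatFunc K}
    (σ : RatFunc K ≃+* RatFunc K) (hσC : ∀ c : K, σ (RatFunc.C c) = RatFunc.C c)
    (hσ1 : σ P.1 = Q.1) (hσ2 : σ P.2 = Q.2)
    (hQc : ¬∃ c : K × K, Q.1 = RatFunc.C c.1 ∧ Q.2 = RatFunc.C c.2)
    (h : repHasRatComponent A P) : repHasRatComponent A Q := by
  obtain ⟨g, hgirr, hgdvd, hgrat⟩ := h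
  -- `repNum A P ≠ 0`
  have hRNP : repNum A P ≠ 0 := by
    intro h0
    have h1 : repPoly A P = 1 := by rw [repPoly, h0, Polynomial.primPart_zero]
    rw [h1] at hgdvd
    exact hgirr.not_isUnit (isUnit_of_dvd_one hgdvd)
  -- `repNum A Q ≠ 0`
  have hRNQ : repNum A Q ≠ 0 := by
    intro h0
    apply hQc
    have hc2 : (repNum A Q).coeff 2 = 0 := by rw [h0]; simp
    have hc1 : (repNum A Q).coeff 1 = 0 := by rw [h0]; simp
    rw [repNum_coeff_two] at hc2
    rw [repNum_coeff_one] at hc1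
    have h2 : (Q.2 - RatFunc.C A.2).num = 0 := by
      rcases mul_eq_zero.mp hc2 with h' | h'
      · exact h'
      · exact absurd h' (Q.1 - RatFunc.C A.1).denom_ne_zero
    have h1 : (Q.1 - RatFunc.C A.1).num = 0 := by
      have h3 : ((Q.1 - RatFunc.C A.1).num * (Q.2 - RatFunc.C A.2).denom) = 0 := by
        have h4 : (-2 : K[X]) ≠ 0 := by
          intro h5
          have := congrArg (fun p => Polynomial.coeff p 0) h5
          norm_num at this
        rcases mul_eq_zero.mp hc1 with h' | h'
        · exact absurd h' h4
        · exact h'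
      rcases mul_eq_zero.mp h3 with h' | h'
      · exact h'
      · exact absurd h' (Q.2 - RatFunc.C A.2).denom_ne_zero
    refine ⟨A, ?_, ?_⟩
    · rw [← sub_eq_zero]
      exact RatFunc.num_eq_zero_iff.mp h1
    · rw [← sub_eq_zero]
      exact RatFunc.num_eq_zero_iff.mp h2
  -- `g` is primitive of positive degree
  have hgprim : g.IsPrimitive := by
    rw [Polynomial.isPrimitive_iff_content_eq_one]
    obtain ⟨k, hk⟩ := hgdvd
    rw [repPoly] at hk
    have hcon := congrArg Polynomial.content hk
    rw [Polynomial.content_primPart] at hcon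
    have hunit : IsUnit g.content := isUnit_of_mul_isUnit_left
      ((Polynomial.associated_content_mul g k).isUnit (by rw [← hcon]; exact isUnit_one))
    rw [← Polynomial.normalize_content]
    exact normalize_eq_one.mpr hunit
  -- Gauss: `g` stays irreducible over the fraction field
  have hgmapirr : Irreducible (g.map (algebraMap K[X] (RatFunc K))) :=
    (hgprim.irreducible_iff_irreducible_map_fraction_map).mp hgirr
  -- transported polynomial
  set G' : Polynomial (RatFunc K) :=
    (g.map (algebraMap K[X] (RatFunc K))).map (σ : RatFunc K →+* RatFunc K) with hG'def
  have hG'irr : Irreducible G' := by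
    have := Irreducible.map (f := Polynomial.mapEquiv σ) hgmapirr
    rwa [Polynomial.mapEquiv_apply] at this
  have hG'ne : G' ≠ 0 := hG'irr.ne_zero
  -- integer normalization
  obtain ⟨b, hb⟩ :=
    IsLocalization.integerNormalization_map_to_map (nonZeroDivisors K[X]) G'
  set iN : Polynomial (Polynomial K) :=
    IsLocalization.integerNormalization (nonZeroDivisors K[X]) G' with hiNdef
  have hbne : (b : K[X]) ≠ 0 := nonZeroDivisors.coe_ne_zero b
  have hambne : algebraMap K[X] (RatFunc K) (b : K[X]) ≠ 0 := RatFunc.algebraMap_ne_zero hbne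
  have hsmul : ((b : K[X]) • G' : Polynomial (RatFunc K)) =
      Polynomial.C (algebraMap K[X] (RatFunc K) (b : K[X])) * G' := by
    rw [← algebraMap_smul (RatFunc K) (b : K[X]) G', Polynomial.smul_eq_C_mul]
  have hiNne : iN ≠ 0 := by
    intro h0
    rw [h0, Polynomial.map_zero] at hb
    rw [hsmul] at hb
    rcases mul_eq_zero.mp hb.symm with h' | h'
    · exact hambne (Polynomial.C_eq_zero.mp h')
    · exact hG'ne h'
  have hcne : iN.content ≠ 0 := fun h0 => hiNne (Polynomial.content_eq_zero_iff.mp h0)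
  have hamcne : algebraMap K[X] (RatFunc K) iN.content ≠ 0 := RatFunc.algebraMap_ne_zero hcne
  set g' : Polynomial (Polynomial K) := iN.primPart with hg'def
  have hg'prim : g'.IsPrimitive := Polynomial.isPrimitive_primPart iN
  have hmap_iN : iN.map (algebraMap K[X] (RatFunc K)) =
      Polynomial.C (algebraMap K[X] (RatFunc K) iN.content) *
        (g'.map (algebraMap K[X] (RatFunc K))) := by
    conv_lhs => rw [iN.eq_C_content_mul_primPart]
    rw [Polynomial.map_mul, Polynomial.map_C]
  set e : RatFunc K := algebraMap K[X] (RatFunc K) (b : K[X]) *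
    (algebraMap K[X] (RatFunc K) iN.content)⁻¹ with hedef
  have hene : e ≠ 0 := mul_ne_zero hambne (inv_ne_zero hamcne)
  have heq : g'.map (algebraMap K[X] (RatFunc K)) = Polynomial.C e * G' := by
    apply mul_left_cancel₀
      (show Polynomial.C (algebraMap K[X] (RatFunc K) iN.content) ≠ 0 from
        fun h0 => hamcne (Polynomial.C_eq_zero.mp h0))
    rw [← hmap_iN, hb, hsmul, ← mul_assoc, ← Polynomial.C_mul, hedef]
    congr 1
    field_simp
  have hg'mapirr : Irreducible (g'.map (algebraMap K[X] (RatFunc K))) := by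
    have hu : IsUnit (Polynomial.C e) :=
      Polynomial.isUnit_C.mpr (isUnit_iff_ne_zero.mpr hene)
    have hassoc : Associated G' (Polynomial.C e * G') :=
      ⟨hu.unit, by rw [IsUnit.unit_spec, mul_comm]⟩
    rw [heq]
    exact hassoc.irreducible hG'irr
  have hg'irr : Irreducible g' :=
    (hg'prim.irreducible_iff_irreducible_map_fraction_map).mpr hg'mapirr
  -- divisibility transfer
  have hgdvd2 : g ∣ repNum A P := hgdvd.trans (repNum A P).primPart_dvd
  have hmdvd : G' ∣ Polynomial.C
      (σ (algebraMap K[X] (RatFunc K)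
        ((P.1 - RatFunc.C A.1).denom * (P.2 - RatFunc.C A.2).denom))) * RP A Q := by
    have h5 := Polynomial.map_dvd (σ : RatFunc K →+* RatFunc K)
      (Polynomial.map_dvd (algebraMap K[X] (RatFunc K)) hgdvd2)
    rw [map_repNum, Polynomial.map_mul, Polynomial.map_C,
      map_sigma_RP σ hσC A hσ1 hσ2] at h5
    exact h5
  have hsigne : σ (algebraMap K[X] (RatFunc K)
      ((P.1 - RatFunc.C A.1).denom * (P.2 - RatFunc.C A.2).denom)) ≠ 0 := by
    intro h0
    apply RatFunc.algebraMap_ne_zero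
      (mul_ne_zero (P.1 - RatFunc.C A.1).denom_ne_zero (P.2 - RatFunc.C A.2).denom_ne_zero)
    exact (map_eq_zero_iff σ σ.injective).mp h0
  have h6 : G' ∣ RP A Q := by
    have hu : IsUnit (Polynomial.C (σ (algebraMap K[X] (RatFunc K)
        ((P.1 - RatFunc.C A.1).denom * (P.2 - RatFunc.C A.2).denom)))) :=
      Polynomial.isUnit_C.mpr (isUnit_iff_ne_zero.mpr hsigne)
    exact (hu.dvd_mul_left).mp hmdvd
  have h7 : g'.map (algebraMap K[X] (RatFunc K)) ∣ RP A Q := by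
    rw [heq]
    have hu : IsUnit (Polynomial.C e) :=
      Polynomial.isUnit_C.mpr (isUnit_iff_ne_zero.mpr hene)
    exact (hu.mul_left_dvd).mpr h6
  have hdQne : algebraMap K[X] (RatFunc K)
      ((Q.1 - RatFunc.C A.1).denom * (Q.2 - RatFunc.C A.2).denom) ≠ 0 :=
    RatFunc.algebraMap_ne_zero
      (mul_ne_zero (Q.1 - RatFunc.C A.1).denom_ne_zero (Q.2 - RatFunc.C A.2).denom_ne_zero)
  have hdvd3 : g'.map (algebraMap K[X] (RatFunc K)) ∣
      (repNum A Q).map (algebraMap K[X] (RatFunc K)) := by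
    rw [map_repNum]
    have hu : IsUnit (Polynomial.C (algebraMap K[X] (RatFunc K)
        ((Q.1 - RatFunc.C A.1).denom * (Q.2 - RatFunc.C A.2).denom))) :=
      Polynomial.isUnit_C.mpr (isUnit_iff_ne_zero.mpr hdQne)
    exact (hu.dvd_mul_left).mpr h7
  have hQcontne : (repNum A Q).content ≠ 0 :=
    fun h0 => hRNQ (Polynomial.content_eq_zero_iff.mp h0)
  have hdvd4 : g'.map (algebraMap K[X] (RatFunc K)) ∣
      (repPoly A Q).map (algebraMap K[X] (RatFunc K)) := by
    have hcQ : (repNum A Q).map (algebraMap K[X] (RatFunc K)) =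
        Polynomial.C (algebraMap K[X] (RatFunc K) (repNum A Q).content) *
          ((repPoly A Q).map (algebraMap K[X] (RatFunc K))) := by
      conv_lhs => rw [(repNum A Q).eq_C_content_mul_primPart]
      rw [Polynomial.map_mul, Polynomial.map_C]
      rfl
    rw [hcQ] at hdvd3
    have hu : IsUnit (Polynomial.C (algebraMap K[X] (RatFunc K) (repNum A Q).content)) :=
      Polynomial.isUnit_C.mpr (isUnit_iff_ne_zero.mpr (RatFunc.algebraMap_ne_zero hQcontne))
    exact (hu.dvd_mul_left).mp hdvd3
  have hdvdQ : g' ∣ repPoly A Q :=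
    hg'prim.dvd_of_fraction_map_dvd_fraction_map
      hdvd4
  -- rationality transfer
  have hrat' : IsRationalSet (zeroSetP g') :=
    isRationalSet_transfer σ hσC hgprim hg'irr hg'prim hene (by rw [heq]) hgrat
  exact ⟨g', hg'irr, hdvdQ, hrat'⟩

end AuxMain


/-- part of Theorem 5 of the paper, (3) ⇔ (4). If two proper
parametrizations `P`, `Q` of `C` are given and `𝔊(P)` has a rational component, then
`𝔊(Q)` also has a rational component. -/
theorem repCurve_rational_component_independent_of_param
    [IsAlgClosed K] [CharZero K]
    (f : MvPolynomial (Fin 2) K) (A : K × K)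
    (hf : Irreducible f)
    (hiso : ¬ IsIsotropicLine (zeroSet f))
    (hline : ¬ IsLineThrough (zeroSet f) A)
    (P Q : RatFunc K × RatFunc K)
    (hP : IsParamOf (zeroSet f) P) (hPproper : IsProper P)
    (hQ : IsParamOf (zeroSet f) Q) (hQproper : IsProper Q)
    (h : repHasRatComponent A P) :
    repHasRatComponent A Q := by
  obtain ⟨σ, hσC, hσ1, hσ2⟩ := exists_sigma hP hQ hPproper hQproper
  exact repHasRat_transfer A σ hσC hσ1 hσ2 hQ.1 h

end ConchoidPaper
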